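/- For every point (ζ₁,ζ₂) in the admissible region ℛ with ζ₂ ≠ 0 satisfying P(ζ₁,ζ₂) = 0, the quantity 2g(ρ₃−ρ₂)h₂²h₃²ζ₂/G₃(h₂,h₃) is positive, hence there exists a real c > 0 with c² equal to this quantity, making (ζ₁,ζ₂) a critical point of the potential V for that value of c. -/

import Mathlib

/-- The geometric locus polynomial `P` of the critical points. -/
noncomputable def Pcurve (ρ1 ρ2 ρ3 H1 H2 H3 z1 z2 : ℝ) : ℝ :=
  (ρ2-ρ1) * z1 * (H1-z1)^2 *
    ((ρ3-ρ2)*(z1-z2+H2)^2*(H3+z2)^2 + ρ2*H2^2*(H3+z2)^2 - ρ3*H3^2*(z1-z2+H2)^2)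
  - (ρ3-ρ2) * z2 * (H3+z2)^2 *
    ((ρ2-ρ1)*(H1-z1)^2*(z1-z2+H2)^2 + ρ1*H1^2*(z1-z2+H2)^2 - ρ2*H2^2*(H1-z1)^2)

/-- The potential `V` of the MMCC3 travelling-wave system. -/
noncomputable def Vpot (ρ1 ρ2 ρ3 H1 H2 H3 g c z1 z2 : ℝ) : ℝ :=
  -(1/2)*c^2*(ρ2-ρ1 + ρ1*H1/(H1-z1))*z1 + (1/2)*(ρ2-ρ1)*g*z1^2
  - (1/2)*c^2*(ρ3-ρ2 - ρ3*H3/(H3+z2))*z2 + (1/2)*(ρ3-ρ2)*g*z2^2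
  - (1/2)*c^2*ρ2*(H2/(z1-z2+H2))*(z2-z1)

/-- Auxiliary: positive `z2` case of the sign lemma. -/
lemma aux_pos_case (ρ1 ρ2 ρ3 H1 H2 H3 z1 z2 : ℝ)
    (hρ1 : 0 < ρ1) (hρ12 : ρ1 < ρ2) (hρ23 : ρ2 < ρ3)
    (hH1 : 0 < H1) (hH2 : 0 < H2) (hH3 : 0 < H3)
    (hh1 : 0 < H1 - z1) (hh2 : 0 < z1 - z2 + H2) (hh3 : 0 < H3 + z2)
    (hz2 : 0 < z2)
    (hPG : (ρ2-ρ1)*z1*(H1-z1)^2*((ρ3-ρ2)*(z1-z2+H2)^2*(H3+z2)^2 + ρ2*H2^2*(H3+z2)^2 - ρ3*H3^2*(z1-z2+H2)^2)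
         = (ρ3-ρ2)*z2*(H3+z2)^2*((ρ2-ρ1)*(H1-z1)^2*(z1-z2+H2)^2 + ρ1*H1^2*(z1-z2+H2)^2 - ρ2*H2^2*(H1-z1)^2))
    (hG3 : (ρ3-ρ2)*(z1-z2+H2)^2*(H3+z2)^2 + ρ2*H2^2*(H3+z2)^2 - ρ3*H3^2*(z1-z2+H2)^2 ≤ 0) :
    False := by
  have hA : (0:ℝ) < (ρ3-ρ2)*(z1-z2+H2)^2 + ρ2*H2^2 :=
    add_pos_of_nonneg_of_pos (mul_nonneg (by linarith) (sq_nonneg _))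
      (mul_pos (by linarith) (by positivity))
  have hH2h2 : H2 < z1 - z2 + H2 := by
    by_contra h
    push_neg at h
    have e1 : (ρ3-ρ2)*(z1-z2+H2)^2*(H3+z2)^2 + ρ2*H2^2*(H3+z2)^2 - ρ3*H3^2*(z1-z2+H2)^2
        = (z2*(z2+2*H3))*((ρ3-ρ2)*(z1-z2+H2)^2 + ρ2*H2^2) + ρ2*H3^2*(H2^2-(z1-z2+H2)^2) := by
      ring
    have hX : (0:ℝ) < (z2*(z2+2*H3))*((ρ3-ρ2)*(z1-z2+H2)^2 + ρ2*H2^2) :=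
      mul_pos (mul_pos hz2 (by linarith)) hA
    have hY : (0:ℝ) ≤ ρ2*H3^2*(H2^2-(z1-z2+H2)^2) := by
      have e : H2^2-(z1-z2+H2)^2 = (H2-(z1-z2+H2))*(H2+(z1-z2+H2)) := by ring
      rw [e]
      exact mul_nonneg (mul_nonneg (by linarith) (sq_nonneg _))
        (mul_nonneg (by linarith) (by linarith))
    rw [e1] at hG3
    linarith
  have hz1 : 0 < z1 := by linarith
  have hG1 : (ρ2-ρ1)*(H1-z1)^2*(z1-z2+H2)^2 + ρ1*H1^2*(z1-z2+H2)^2 - ρ2*H2^2*(H1-z1)^2 ≤ 0 := by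
    by_contra h
    push_neg at h
    have hL : (ρ2-ρ1)*z1*(H1-z1)^2*((ρ3-ρ2)*(z1-z2+H2)^2*(H3+z2)^2 + ρ2*H2^2*(H3+z2)^2 - ρ3*H3^2*(z1-z2+H2)^2) ≤ 0 :=
      mul_nonpos_of_nonneg_of_nonpos (mul_nonneg (mul_nonneg (by linarith : (0:ℝ) ≤ ρ2-ρ1) hz1.le) (sq_nonneg _)) hG3
    have hR : 0 < (ρ3-ρ2)*z2*(H3+z2)^2*((ρ2-ρ1)*(H1-z1)^2*(z1-z2+H2)^2 + ρ1*H1^2*(z1-z2+H2)^2 - ρ2*H2^2*(H1-z1)^2) :=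
      mul_pos (mul_pos (mul_pos (by linarith : (0:ℝ) < ρ3-ρ2) hz2) (pow_pos hh3 2)) h
    linarith
  have hB : (0:ℝ) < (ρ2-ρ1)*(H1-z1)^2 + ρ1*H1^2 :=
    add_pos_of_nonneg_of_pos (mul_nonneg (by linarith) (sq_nonneg _))
      (mul_pos hρ1 (by positivity))
  have e2 : (ρ2-ρ1)*(H1-z1)^2*(z1-z2+H2)^2 + ρ1*H1^2*(z1-z2+H2)^2 - ρ2*H2^2*(H1-z1)^2
      = ((z1-z2)*(z1-z2+2*H2))*((ρ2-ρ1)*(H1-z1)^2 + ρ1*H1^2) + ρ1*H2^2*(z1*(2*H1-z1)) := by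
    ring
  have hX : (0:ℝ) < ((z1-z2)*(z1-z2+2*H2))*((ρ2-ρ1)*(H1-z1)^2 + ρ1*H1^2) :=
    mul_pos (mul_pos (by linarith) (by linarith)) hB
  have hY : (0:ℝ) < ρ1*H2^2*(z1*(2*H1-z1)) :=
    mul_pos (mul_pos hρ1 (by positivity)) (mul_pos hz1 (by linarith))
  rw [e2] at hG1
  linarith

/-- Auxiliary: negative `z2` case of the sign lemma. -/
lemma aux_neg_case (ρ1 ρ2 ρ3 H1 H2 H3 z1 z2 : ℝ)
    (hρ1 : 0 < ρ1) (hρ12 : ρ1 < ρ2) (hρ23 : ρ2 < ρ3)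
    (hH1 : 0 < H1) (hH2 : 0 < H2) (hH3 : 0 < H3)
    (hh1 : 0 < H1 - z1) (hh2 : 0 < z1 - z2 + H2) (hh3 : 0 < H3 + z2)
    (hz2 : z2 < 0)
    (hPG : (ρ2-ρ1)*z1*(H1-z1)^2*((ρ3-ρ2)*(z1-z2+H2)^2*(H3+z2)^2 + ρ2*H2^2*(H3+z2)^2 - ρ3*H3^2*(z1-z2+H2)^2)
         = (ρ3-ρ2)*z2*(H3+z2)^2*((ρ2-ρ1)*(H1-z1)^2*(z1-z2+H2)^2 + ρ1*H1^2*(z1-z2+H2)^2 - ρ2*H2^2*(H1-z1)^2))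
    (hG3 : 0 ≤ (ρ3-ρ2)*(z1-z2+H2)^2*(H3+z2)^2 + ρ2*H2^2*(H3+z2)^2 - ρ3*H3^2*(z1-z2+H2)^2) :
    False := by
  have hA : (0:ℝ) < (ρ3-ρ2)*(z1-z2+H2)^2 + ρ2*H2^2 :=
    add_pos_of_nonneg_of_pos (mul_nonneg (by linarith) (sq_nonneg _))
      (mul_pos (by linarith) (by positivity))
  have hH2h2 : z1 - z2 + H2 < H2 := by
    by_contra h
    push_neg at h
    have e1 : (ρ3-ρ2)*(z1-z2+H2)^2*(H3+z2)^2 + ρ2*H2^2*(H3+z2)^2 - ρ3*H3^2*(z1-z2+H2)^2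
        = (z2*(z2+2*H3))*((ρ3-ρ2)*(z1-z2+H2)^2 + ρ2*H2^2) + ρ2*H3^2*(H2^2-(z1-z2+H2)^2) := by
      ring
    have hX : (z2*(z2+2*H3))*((ρ3-ρ2)*(z1-z2+H2)^2 + ρ2*H2^2) < 0 :=
      mul_neg_of_neg_of_pos (mul_neg_of_neg_of_pos hz2 (by linarith)) hA
    have hY : ρ2*H3^2*(H2^2-(z1-z2+H2)^2) ≤ 0 := by
      have e : H2^2-(z1-z2+H2)^2 = (H2-(z1-z2+H2))*(H2+(z1-z2+H2)) := by ring
      rw [e]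
      exact mul_nonpos_of_nonneg_of_nonpos (mul_nonneg (by linarith) (sq_nonneg _))
        (mul_nonpos_of_nonpos_of_nonneg (by linarith) (by linarith))
    rw [e1] at hG3
    linarith
  have hz1 : z1 < 0 := by linarith
  have hG1 : 0 ≤ (ρ2-ρ1)*(H1-z1)^2*(z1-z2+H2)^2 + ρ1*H1^2*(z1-z2+H2)^2 - ρ2*H2^2*(H1-z1)^2 := by
    by_contra h
    push_neg at h
    have hL : (ρ2-ρ1)*z1*(H1-z1)^2*((ρ3-ρ2)*(z1-z2+H2)^2*(H3+z2)^2 + ρ2*H2^2*(H3+z2)^2 - ρ3*H3^2*(z1-z2+H2)^2) ≤ 0 :=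
      mul_nonpos_of_nonpos_of_nonneg
        (mul_nonpos_of_nonpos_of_nonneg
          (mul_nonpos_of_nonneg_of_nonpos (by linarith : (0:ℝ) ≤ ρ2-ρ1) hz1.le) (sq_nonneg _)) hG3
    have hR : 0 < (ρ3-ρ2)*z2*(H3+z2)^2*((ρ2-ρ1)*(H1-z1)^2*(z1-z2+H2)^2 + ρ1*H1^2*(z1-z2+H2)^2 - ρ2*H2^2*(H1-z1)^2) := by
      have : (ρ3-ρ2)*z2*(H3+z2)^2 < 0 :=
        mul_neg_of_neg_of_pos (mul_neg_of_pos_of_neg (by linarith) hz2) (pow_pos hh3 2)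
      exact mul_pos_of_neg_of_neg this h
    linarith
  have hB : (0:ℝ) < (ρ2-ρ1)*(H1-z1)^2 + ρ1*H1^2 :=
    add_pos_of_nonneg_of_pos (mul_nonneg (by linarith) (sq_nonneg _))
      (mul_pos hρ1 (by positivity))
  have e2 : (ρ2-ρ1)*(H1-z1)^2*(z1-z2+H2)^2 + ρ1*H1^2*(z1-z2+H2)^2 - ρ2*H2^2*(H1-z1)^2
      = ((z1-z2)*(z1-z2+2*H2))*((ρ2-ρ1)*(H1-z1)^2 + ρ1*H1^2) + ρ1*H2^2*(z1*(2*H1-z1)) := by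
    ring
  have hX : ((z1-z2)*(z1-z2+2*H2))*((ρ2-ρ1)*(H1-z1)^2 + ρ1*H1^2) < 0 :=
    mul_neg_of_neg_of_pos (mul_neg_of_neg_of_pos (by linarith) (by linarith)) hB
  have hY : ρ1*H2^2*(z1*(2*H1-z1)) < 0 :=
    mul_neg_of_pos_of_neg (mul_pos hρ1 (by positivity)) (mul_neg_of_neg_of_pos hz1 (by linarith))
  rw [e2] at hG1
  linarith

set_option maxHeartbeats 1000000 in
set_option maxRecDepth 4000 in
theorem stmt_10 (ρ1 ρ2 ρ3 H1 H2 H3 g z1 z2 : ℝ)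
    (hρ1 : 0 < ρ1) (hρ12 : ρ1 < ρ2) (hρ23 : ρ2 < ρ3)
    (hH1 : 0 < H1) (hH2 : 0 < H2) (hH3 : 0 < H3) (hg : 0 < g)
    (hh1 : 0 < H1 - z1) (hh2 : 0 < z1 - z2 + H2) (hh3 : 0 < H3 + z2)
    (hz2 : z2 ≠ 0)
    (hP : Pcurve ρ1 ρ2 ρ3 H1 H2 H3 z1 z2 = 0) :
    0 < 2*g*(ρ3-ρ2)*(z1-z2+H2)^2*(H3+z2)^2*z2 /
        ((ρ3-ρ2)*(z1-z2+H2)^2*(H3+z2)^2 + ρ2*H2^2*(H3+z2)^2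
          - ρ3*H3^2*(z1-z2+H2)^2) ∧
    ∃ c : ℝ, 0 < c ∧
      c^2 = 2*g*(ρ3-ρ2)*(z1-z2+H2)^2*(H3+z2)^2*z2 /
        ((ρ3-ρ2)*(z1-z2+H2)^2*(H3+z2)^2 + ρ2*H2^2*(H3+z2)^2
          - ρ3*H3^2*(z1-z2+H2)^2) ∧
      deriv (fun x => Vpot ρ1 ρ2 ρ3 H1 H2 H3 g c x z2) z1 = 0 ∧
      deriv (fun y => Vpot ρ1 ρ2 ρ3 H1 H2 H3 g c z1 y) z2 = 0 := by
  have h1ne : H1 - z1 ≠ 0 := ne_of_gt hh1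
  have h2ne : z1 - z2 + H2 ≠ 0 := ne_of_gt hh2
  have h3ne : H3 + z2 ≠ 0 := ne_of_gt hh3
  have hPG : (ρ2-ρ1)*z1*(H1-z1)^2*((ρ3-ρ2)*(z1-z2+H2)^2*(H3+z2)^2 + ρ2*H2^2*(H3+z2)^2 - ρ3*H3^2*(z1-z2+H2)^2)
      = (ρ3-ρ2)*z2*(H3+z2)^2*((ρ2-ρ1)*(H1-z1)^2*(z1-z2+H2)^2 + ρ1*H1^2*(z1-z2+H2)^2 - ρ2*H2^2*(H1-z1)^2) := by
    have := hP
    unfold Pcurve at this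
    linarith
  -- key sign fact
  have hkey : 0 < z2 * ((ρ3-ρ2)*(z1-z2+H2)^2*(H3+z2)^2 + ρ2*H2^2*(H3+z2)^2 - ρ3*H3^2*(z1-z2+H2)^2) := by
    rcases lt_or_gt_of_ne hz2 with hneg | hpos
    · rcases lt_trichotomy ((ρ3-ρ2)*(z1-z2+H2)^2*(H3+z2)^2 + ρ2*H2^2*(H3+z2)^2 - ρ3*H3^2*(z1-z2+H2)^2) 0 with h | h | h
      · exact mul_pos_of_neg_of_neg hneg h
      · exact absurd h.ge (fun hge => aux_neg_case ρ1 ρ2 ρ3 H1 H2 H3 z1 z2 hρ1 hρ12 hρ23 hH1 hH2 hH3 hh1 hh2 hh3 hneg hPG hge)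
      · exact absurd h.le (fun hle => aux_neg_case ρ1 ρ2 ρ3 H1 H2 H3 z1 z2 hρ1 hρ12 hρ23 hH1 hH2 hH3 hh1 hh2 hh3 hneg hPG hle)
    · have hG3pos : 0 < (ρ3-ρ2)*(z1-z2+H2)^2*(H3+z2)^2 + ρ2*H2^2*(H3+z2)^2 - ρ3*H3^2*(z1-z2+H2)^2 := by
        by_contra h
        push_neg at h
        exact aux_pos_case ρ1 ρ2 ρ3 H1 H2 H3 z1 z2 hρ1 hρ12 hρ23 hH1 hH2 hH3 hh1 hh2 hh3 hpos hPG h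
      exact mul_pos hpos hG3pos
  have hG3ne : (ρ3-ρ2)*(z1-z2+H2)^2*(H3+z2)^2 + ρ2*H2^2*(H3+z2)^2 - ρ3*H3^2*(z1-z2+H2)^2 ≠ 0 := by
    intro h
    rw [h, mul_zero] at hkey
    exact lt_irrefl 0 hkey
  have hE : 0 < 2*g*(ρ3-ρ2)*(z1-z2+H2)^2*(H3+z2)^2*z2 /
      ((ρ3-ρ2)*(z1-z2+H2)^2*(H3+z2)^2 + ρ2*H2^2*(H3+z2)^2 - ρ3*H3^2*(z1-z2+H2)^2) := by
    rw [show 2*g*(ρ3-ρ2)*(z1-z2+H2)^2*(H3+z2)^2*z2 /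
        ((ρ3-ρ2)*(z1-z2+H2)^2*(H3+z2)^2 + ρ2*H2^2*(H3+z2)^2 - ρ3*H3^2*(z1-z2+H2)^2)
      = (2*g*(ρ3-ρ2)*(z1-z2+H2)^2*(H3+z2)^2) *
        (z2 * ((ρ3-ρ2)*(z1-z2+H2)^2*(H3+z2)^2 + ρ2*H2^2*(H3+z2)^2 - ρ3*H3^2*(z1-z2+H2)^2)) /
        ((ρ3-ρ2)*(z1-z2+H2)^2*(H3+z2)^2 + ρ2*H2^2*(H3+z2)^2 - ρ3*H3^2*(z1-z2+H2)^2)^2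
      from by field_simp]
    apply div_pos
    · exact mul_pos (mul_pos (mul_pos (mul_pos (by linarith : (0:ℝ) < 2*g)
        (by linarith : (0:ℝ) < ρ3-ρ2)) (pow_pos hh2 2)) (pow_pos hh3 2)) hkey
    · exact pow_two_pos_of_ne_zero hG3ne
  obtain ⟨c, hcpos, hc2⟩ : ∃ c : ℝ, 0 < c ∧ c^2 = 2*g*(ρ3-ρ2)*(z1-z2+H2)^2*(H3+z2)^2*z2 /
      ((ρ3-ρ2)*(z1-z2+H2)^2*(H3+z2)^2 + ρ2*H2^2*(H3+z2)^2 - ρ3*H3^2*(z1-z2+H2)^2) :=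
    ⟨Real.sqrt _, Real.sqrt_pos.mpr hE, Real.sq_sqrt hE.le⟩
  have hc2G3 : c^2 * ((ρ3-ρ2)*(z1-z2+H2)^2*(H3+z2)^2 + ρ2*H2^2*(H3+z2)^2 - ρ3*H3^2*(z1-z2+H2)^2)
      = 2*g*(ρ3-ρ2)*(z1-z2+H2)^2*(H3+z2)^2*z2 := by
    rw [hc2]
    rw [div_mul_eq_mul_div, div_eq_iff hG3ne]
  have hc2G1 : c^2 * ((ρ2-ρ1)*(H1-z1)^2*(z1-z2+H2)^2 + ρ1*H1^2*(z1-z2+H2)^2 - ρ2*H2^2*(H1-z1)^2)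
      = 2*g*(ρ2-ρ1)*z1*(H1-z1)^2*(z1-z2+H2)^2 := by
    rw [hc2]
    rw [div_mul_eq_mul_div, div_eq_iff hG3ne]
    set p := (H1-z1)^2 with hp
    set q := (z1-z2+H2)^2 with hq
    set r := (H3+z2)^2 with hr
    clear_value p q r
    linear_combination (-(2*g*q)) * hPG
  refine ⟨hE, c, hcpos, hc2, ?_, ?_⟩
  · -- derivative in z1
    have hfx : (fun x => Vpot ρ1 ρ2 ρ3 H1 H2 H3 g c x z2) = fun x =>
        (-(1/2)*c^2*(ρ2-ρ1))*x + (-(1/2)*c^2*ρ1*H1)*(x/(H1-x)) + ((1/2)*(ρ2-ρ1)*g)*x^2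
        + (-(1/2)*c^2*ρ2*H2)*((z2-x)/(x-z2+H2))
        + (-(1/2)*c^2*(ρ3-ρ2 - ρ3*H3/(H3+z2))*z2 + (1/2)*(ρ3-ρ2)*g*z2^2) := by
      funext x; unfold Vpot; ring
    have d1 : HasDerivAt (fun x : ℝ => x/(H1-x)) ((1*(H1-z1) - z1*(0-1))/(H1-z1)^2) z1 :=
      (hasDerivAt_id z1).div ((hasDerivAt_const z1 H1).sub (hasDerivAt_id z1)) h1ne
    have d2 : HasDerivAt (fun x : ℝ => (z2-x)/(x-z2+H2))
        (((0-1)*(z1-z2+H2) - (z2-z1)*1)/(z1-z2+H2)^2) z1 :=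
      ((hasDerivAt_const z1 z2).sub (hasDerivAt_id z1)).div
        (((hasDerivAt_id z1).sub_const z2).add_const H2) h2ne
    have hd : HasDerivAt (fun x : ℝ =>
        (-(1/2)*c^2*(ρ2-ρ1))*x + (-(1/2)*c^2*ρ1*H1)*(x/(H1-x)) + ((1/2)*(ρ2-ρ1)*g)*x^2
        + (-(1/2)*c^2*ρ2*H2)*((z2-x)/(x-z2+H2))
        + (-(1/2)*c^2*(ρ3-ρ2 - ρ3*H3/(H3+z2))*z2 + (1/2)*(ρ3-ρ2)*g*z2^2))
        ((-(1/2)*c^2*(ρ2-ρ1))*1 + (-(1/2)*c^2*ρ1*H1)*((1*(H1-z1) - z1*(0-1))/(H1-z1)^2)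
        + ((1/2)*(ρ2-ρ1)*g)*((2:ℕ)*z1^(2-1))
        + (-(1/2)*c^2*ρ2*H2)*(((0-1)*(z1-z2+H2) - (z2-z1)*1)/(z1-z2+H2)^2)) z1 :=
      ((((HasDerivAt.const_mul _ (hasDerivAt_id' z1)).add
        (HasDerivAt.const_mul _ d1)).add
        (HasDerivAt.const_mul _ (hasDerivAt_pow 2 z1))).add
        (HasDerivAt.const_mul _ d2)).add_const _
    rw [hfx, hd.deriv]
    push_cast
    have hpne : (H1-z1)^2 ≠ 0 := pow_ne_zero 2 h1ne
    have hqne : (z1-z2+H2)^2 ≠ 0 := pow_ne_zero 2 h2ne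
    set p := (H1-z1)^2 with hp
    set q := (z1-z2+H2)^2 with hq
    clear_value p q
    field_simp
    linear_combination (-1)*hc2G1
  · -- derivative in z2
    have hfy : (fun y => Vpot ρ1 ρ2 ρ3 H1 H2 H3 g c z1 y) = fun y =>
        (-(1/2)*c^2*(ρ3-ρ2))*y + ((1/2)*c^2*ρ3*H3)*(y/(H3+y)) + ((1/2)*(ρ3-ρ2)*g)*y^2
        + (-(1/2)*c^2*ρ2*H2)*((y-z1)/(z1-y+H2))
        + (-(1/2)*c^2*(ρ2-ρ1 + ρ1*H1/(H1-z1))*z1 + (1/2)*(ρ2-ρ1)*g*z1^2) := by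
      funext y; unfold Vpot; ring
    have d3 : HasDerivAt (fun y : ℝ => y/(H3+y)) ((1*(H3+z2) - z2*(0+1))/(H3+z2)^2) z2 :=
      (hasDerivAt_id z2).div ((hasDerivAt_const z2 H3).add (hasDerivAt_id z2)) h3ne
    have d4 : HasDerivAt (fun y : ℝ => (y-z1)/(z1-y+H2))
        (((1)*(z1-z2+H2) - (z2-z1)*(0-1))/(z1-z2+H2)^2) z2 :=
      ((hasDerivAt_id z2).sub_const z1).div
        (((hasDerivAt_const z2 z1).sub (hasDerivAt_id z2)).add_const H2) h2ne
    have hd : HasDerivAt (fun y : ℝ =>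
        (-(1/2)*c^2*(ρ3-ρ2))*y + ((1/2)*c^2*ρ3*H3)*(y/(H3+y)) + ((1/2)*(ρ3-ρ2)*g)*y^2
        + (-(1/2)*c^2*ρ2*H2)*((y-z1)/(z1-y+H2))
        + (-(1/2)*c^2*(ρ2-ρ1 + ρ1*H1/(H1-z1))*z1 + (1/2)*(ρ2-ρ1)*g*z1^2))
        ((-(1/2)*c^2*(ρ3-ρ2))*1 + ((1/2)*c^2*ρ3*H3)*((1*(H3+z2) - z2*(0+1))/(H3+z2)^2)
        + ((1/2)*(ρ3-ρ2)*g)*((2:ℕ)*z2^(2-1))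
        + (-(1/2)*c^2*ρ2*H2)*(((1)*(z1-z2+H2) - (z2-z1)*(0-1))/(z1-z2+H2)^2)) z2 :=
      ((((HasDerivAt.const_mul _ (hasDerivAt_id' z2)).add
        (HasDerivAt.const_mul _ d3)).add
        (HasDerivAt.const_mul _ (hasDerivAt_pow 2 z2))).add
        (HasDerivAt.const_mul _ d4)).add_const _
    rw [hfy, hd.deriv]
    push_cast
    have hqne : (z1-z2+H2)^2 ≠ 0 := pow_ne_zero 2 h2ne
    have hrne : (H3+z2)^2 ≠ 0 := pow_ne_zero 2 h3ne
    set q := (z1-z2+H2)^2 with hq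
    set r := (H3+z2)^2 with hr
    clear_value q r
    field_simp
    linear_combination (-1)*hc2G3
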